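/- If M ∈ M_N(ℂ) is Hermitian with eigenvalues a₁ ≤ … ≤ a_N and a_{N-k+1} < a_k, then Λ_k(M) is empty. -/

import Mathlib

open Matrix BigOperators Finset

noncomputable section

/-- Numerical range of a complex matrix. -/
def NumRange {n : ℕ} (M : Matrix (Fin n) (Fin n) ℂ) : Set ℂ :=
  { c | ∃ u : Fin n → ℂ, star u ⬝ᵥ u = 1 ∧ star u ⬝ᵥ M.mulVec u = c }

/-- `C` is a rank-`k` compression of `M`: `C` represents `P_S M |_S` in some
orthonormal basis of a `k`-dimensional subspace `S`. -/
def IsCompression {N k : ℕ} (M : Matrix (Fin N) (Fin N) ℂ)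
    (C : Matrix (Fin k) (Fin k) ℂ) : Prop :=
  ∃ f : Fin k → (Fin N → ℂ),
    (∀ i j, star (f i) ⬝ᵥ f j = if i = j then 1 else 0) ∧
    (∀ i j, C i j = star (f i) ⬝ᵥ M.mulVec (f j))

/-- `diag(a,b)` is a compression of `M`. -/
def IsDiagCompression {N : ℕ} (M : Matrix (Fin N) (Fin N) ℂ) (a b : ℂ) : Prop :=
  ∃ u w : Fin N → ℂ,
    star u ⬝ᵥ u = 1 ∧ star w ⬝ᵥ w = 1 ∧ star u ⬝ᵥ w = 0 ∧
    star u ⬝ᵥ M.mulVec u = a ∧ star w ⬝ᵥ M.mulVec w = b ∧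
    star u ⬝ᵥ M.mulVec w = 0 ∧ star w ⬝ᵥ M.mulVec u = 0

/-- The rank-`k` numerical range `Λ_k(M)`. -/
def rankNumRange {N : ℕ} (k : ℕ) (M : Matrix (Fin N) (Fin N) ℂ) : Set ℂ :=
  { c | ∃ P : Matrix (Fin N) (Fin N) ℂ,
      P.IsHermitian ∧ P * P = P ∧ P.rank = k ∧ P * M * P = c • P }

/-- `M` has an orthonormal basis of eigenvectors with eigenvalue list `z`. -/
def HasONEigenbasis {N : ℕ} (M : Matrix (Fin N) (Fin N) ℂ) (z : Fin N → ℂ) : Prop :=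
  ∃ f : Fin N → (Fin N → ℂ),
    (∀ i j, star (f i) ⬝ᵥ f j = if i = j then 1 else 0) ∧
    (∀ j, M.mulVec (f j) = z j • f j)

/-- 2D cross product of complex numbers viewed as plane vectors. -/
def cross2 (p q : ℂ) : ℝ := p.re * q.im - p.im * q.re

lemma dotP_sum_right {n : ℕ} {ι : Type*} (s : Finset ι) (v : Fin n → ℂ) (g : ι → Fin n → ℂ) :
    v ⬝ᵥ (∑ i ∈ s, g i) = ∑ i ∈ s, v ⬝ᵥ g i := by
  simp only [dotProduct, Finset.sum_apply, Finset.mul_sum]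
  exact Finset.sum_comm

lemma dotP_sum_left {n : ℕ} {ι : Type*} (s : Finset ι) (v : Fin n → ℂ) (g : ι → Fin n → ℂ) :
    (∑ i ∈ s, g i) ⬝ᵥ v = ∑ i ∈ s, g i ⬝ᵥ v := by
  simp only [dotProduct, Finset.sum_apply, Finset.sum_mul]
  exact Finset.sum_comm

lemma key_aux {N k : ℕ} (M P : Matrix (Fin N) (Fin N) ℂ)
    (f : Fin N → Fin N → ℂ)
    (horth : ∀ i j, star (f i) ⬝ᵥ f j = if i = j then 1 else 0)
    (a : Fin N → ℝ)
    (heig : ∀ j, M.mulVec (f j) = (a j : ℂ) • f j)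
    (hP : P.IsHermitian) (hP2 : P * P = P) (hrank : P.rank = k)
    (lam : ℂ) (hPMP : P * M * P = lam • P)
    (t : Finset (Fin N)) (hcard : N < k + t.card) :
    ∃ w : t → ℝ, (∀ j, 0 ≤ w j) ∧ (∑ j, w j) = 1 ∧
      lam = ((∑ j, w j * a (j : Fin N) : ℝ) : ℂ) := by
  classical
  -- dot products with linear combinations
  have hdot : ∀ (d : t → ℂ) (i : Fin N),
      star (f i) ⬝ᵥ (∑ j : t, d j • f (j : Fin N)) =
        ∑ j : t, d j * (if i = (j : Fin N) then 1 else 0) := by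
    intro d i
    rw [dotP_sum_right]
    refine Finset.sum_congr rfl fun j _ => ?_
    rw [dotProduct_smul, horth, smul_eq_mul]
  have horth' : ∀ (c d : t → ℂ),
      star (∑ i : t, c i • f (i : Fin N)) ⬝ᵥ (∑ j : t, d j • f (j : Fin N)) =
        ∑ i : t, star (c i) * d i := by
    intro c d
    rw [star_sum, dotP_sum_left]
    refine Finset.sum_congr rfl fun i _ => ?_
    rw [star_smul, smul_dotProduct, hdot, smul_eq_mul]
    congr 1
    rw [Finset.sum_eq_single i]
    · simp
    · intro j _ hj
      have : ¬ ((i : Fin N) = (j : Fin N)) := fun h => hj (Subtype.ext h.symm)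
      simp [this]
    · simp
  -- linear independence
  have hlig : LinearIndependent ℂ (fun i : t => f (i : Fin N)) := by
    rw [Fintype.linearIndependent_iff]
    intro c hc j
    have h := congrArg (fun v => star (f (j : Fin N)) ⬝ᵥ v) hc
    simp only [dotProduct_zero] at h
    rw [hdot] at h
    rw [Finset.sum_eq_single j] at h
    · simpa using h
    · intro i _ hi
      have : ¬ ((j : Fin N) = (i : Fin N)) := fun hh => hi (Subtype.ext hh.symm)
      simp [this]
    · simp
  set S : Submodule ℂ (Fin N → ℂ) := Submodule.span ℂ (Set.range fun i : t => f (i : Fin N)) with hSdef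
  have hS : Module.finrank ℂ S = t.card := by
    rw [hSdef, finrank_span_eq_card hlig, Fintype.card_coe]
  set Rg : Submodule ℂ (Fin N → ℂ) := LinearMap.range P.mulVecLin with hRdef
  have hR : Module.finrank ℂ Rg = k := hrank
  have hfin : Module.finrank ℂ (Fin N → ℂ) = N := by simp
  have hpos : 0 < Module.finrank ℂ (↥(Rg ⊓ S)) := by
    have h1 := Submodule.finrank_sup_add_finrank_inf_eq Rg S
    have h2 : Module.finrank ℂ ↥(Rg ⊔ S) ≤ Module.finrank ℂ (Fin N → ℂ) := Submodule.finrank_le _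
    rw [hfin] at h2
    omega
  obtain ⟨⟨u, huRS⟩, hu0'⟩ := Module.finrank_pos_iff_exists_ne_zero.mp hpos
  have hu0 : u ≠ 0 := fun h => hu0' (Subtype.ext h)
  obtain ⟨huR, huS⟩ := huRS
  obtain ⟨c, hc⟩ := (Submodule.mem_span_range_iff_exists_fun ℂ).mp huS
  have hPu : P *ᵥ u = u := by
    obtain ⟨v, hv⟩ := huR
    rw [Matrix.mulVecLin_apply] at hv
    rw [← hv, Matrix.mulVec_mulVec, hP2]
  have hmain : lam * (star u ⬝ᵥ u) = star u ⬝ᵥ (M *ᵥ u) := by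
    conv_rhs => rw [← hPu, Matrix.star_mulVec, ← Matrix.dotProduct_mulVec,
      Matrix.mulVec_mulVec, Matrix.mulVec_mulVec, hP.eq, hPMP,
      Matrix.smul_mulVec, dotProduct_smul, smul_eq_mul, hPu]
  set s : ℝ := ∑ i : t, Complex.normSq (c i) with hsdef
  set r : ℝ := ∑ i : t, Complex.normSq (c i) * a (i : Fin N) with hrdef
  have hsu : star u ⬝ᵥ u = (s : ℂ) := by
    rw [← hc, horth', hsdef]
    push_cast
    refine Finset.sum_congr rfl fun i _ => ?_
    rw [Complex.normSq_eq_conj_mul_self]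
    rfl
  have hMu : M *ᵥ u = ∑ i : t, ((a (i : Fin N) : ℂ) * c i) • f (i : Fin N) := by
    rw [← hc]
    have : M *ᵥ (∑ i : t, c i • f (i : Fin N)) = ∑ i : t, c i • (M *ᵥ f (i : Fin N)) := by
      simp only [← Matrix.mulVecLin_apply, map_sum, LinearMap.map_smul]
    rw [this]
    refine Finset.sum_congr rfl fun i _ => ?_
    rw [heig, smul_smul, mul_comm]
  have hru : star u ⬝ᵥ (M *ᵥ u) = (r : ℂ) := by
    rw [hMu, ← hc, horth', hrdef]
    push_cast
    refine Finset.sum_congr rfl fun i _ => ?_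
    simp only [Complex.normSq_eq_conj_mul_self, Complex.star_def]
    ring
  have hspos : 0 < s := by
    rcases Function.ne_iff.mp (fun h : c = 0 => hu0 (by rw [← hc, h]; simp)) with ⟨i, hi⟩
    exact Finset.sum_pos' (fun j _ => Complex.normSq_nonneg _)
      ⟨i, Finset.mem_univ i, Complex.normSq_pos.mpr hi⟩
  have hlameq : lam = ((r / s : ℝ) : ℂ) := by
    have hsne : (s : ℂ) ≠ 0 := by exact_mod_cast hspos.ne'
    rw [hsu, hru] at hmain
    field_simp
    rw [Complex.ofReal_div, eq_div_iff hsne]; exact hmain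
  refine ⟨fun j => Complex.normSq (c j) / s, fun j => div_nonneg (Complex.normSq_nonneg _) hspos.le, ?_, ?_⟩
  · rw [← Finset.sum_div, ← hsdef, div_self hspos.ne']
  · rw [hlameq]
    congr 1
    rw [div_eq_iff hspos.ne', Finset.sum_mul, hrdef]
    refine Finset.sum_congr rfl fun i _ => ?_
    field_simp

theorem stmt_5 {N k : ℕ} (hk : 1 ≤ k) (hkN : k ≤ N)
    (M : Matrix (Fin N) (Fin N) ℂ) (hM : M.IsHermitian)
    (a : Fin N → ℝ) (ha : Monotone a)
    (heig : HasONEigenbasis M (fun j => (a j : ℂ)))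
    (hlt : a ⟨N - k, by omega⟩ < a ⟨k - 1, by omega⟩) :
    rankNumRange k M = ∅ := by
  obtain ⟨f, horth, heigf⟩ := heig
  rw [Set.eq_empty_iff_forall_notMem]
  rintro lam ⟨P, hP, hP2, hrank, hPMP⟩
  have heigf' : ∀ j, M.mulVec (f j) = (a j : ℂ) • f j := heigf
  have hm1 : N - k < N := by omega
  have hm2 : k - 1 < N := by omega
  obtain ⟨w1, hw1nn, hw1sum, hlam1⟩ :=
    key_aux M P f horth a heigf' hP hP2 hrank lam hPMP (Finset.Iic ⟨N - k, hm1⟩)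
      (by rw [Fin.card_Iic]; show N < k + (N - k + 1); omega)
  obtain ⟨w2, hw2nn, hw2sum, hlam2⟩ :=
    key_aux M P f horth a heigf' hP hP2 hrank lam hPMP (Finset.Ici ⟨k - 1, hm2⟩)
      (by rw [Fin.card_Ici]; show N < k + (N - (k - 1)); omega)
  have h1 : ∑ j : (Finset.Iic (⟨N - k, hm1⟩ : Fin N)), w1 j * a (j : Fin N) ≤ a ⟨N - k, hm1⟩ :=
    calc ∑ j : (Finset.Iic (⟨N - k, hm1⟩ : Fin N)), w1 j * a (j : Fin N)
        ≤ ∑ j : (Finset.Iic (⟨N - k, hm1⟩ : Fin N)), w1 j * a ⟨N - k, hm1⟩ :=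
          Finset.sum_le_sum fun j _ =>
            mul_le_mul_of_nonneg_left (ha (Finset.mem_Iic.mp j.2)) (hw1nn j)
      _ = a ⟨N - k, hm1⟩ := by rw [← Finset.sum_mul, hw1sum, one_mul]
  have h2 : a ⟨k - 1, hm2⟩ ≤ ∑ j : (Finset.Ici (⟨k - 1, hm2⟩ : Fin N)), w2 j * a (j : Fin N) :=
    calc a ⟨k - 1, hm2⟩
        = ∑ j : (Finset.Ici (⟨k - 1, hm2⟩ : Fin N)), w2 j * a ⟨k - 1, hm2⟩ := by
          rw [← Finset.sum_mul, hw2sum, one_mul]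
      _ ≤ ∑ j : (Finset.Ici (⟨k - 1, hm2⟩ : Fin N)), w2 j * a (j : Fin N) :=
          Finset.sum_le_sum fun j _ =>
            mul_le_mul_of_nonneg_left (ha (Finset.mem_Ici.mp j.2)) (hw2nn j)
  have heq : (∑ j : (Finset.Iic (⟨N - k, hm1⟩ : Fin N)), w1 j * a (j : Fin N))
      = ∑ j : (Finset.Ici (⟨k - 1, hm2⟩ : Fin N)), w2 j * a (j : Fin N) :=
    Complex.ofReal_inj.mp (hlam1 ▸ hlam2)
  have e1 : a (⟨N - k, hm1⟩ : Fin N) = a ⟨N - k, by omega⟩ := rfl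
  have e2 : a (⟨k - 1, hm2⟩ : Fin N) = a ⟨k - 1, by omega⟩ := rfl
  rw [e1] at h1
  rw [e2] at h2
  linarith
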